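/- Let c₁, c₂, c₃ ∈ ℝ and let v be the vector field on ℝ³ given in the frame (e₁, e₂, e₃) by v = v¹e₁ + v²e₂ + v³e₃ with v¹ = -(c₁ cos x³ + c₂ sin x³)x¹ + (c₂ cos x³ - c₁ sin x³)x² + sin x³, v² = -(c₂ cos x³ - c₁ sin x³)x¹ - (c₁ cos x³ + c₂ sin x³)x² + cos x³, v³ = c₃. Then the Lie derivative of g along v, defined pointwise on constant vectors u, w by (ℒ_v g)_p(u, w) = D_p[q ↦ g_q(u, w)](v(p)) + g_p(Dv_p(u), w) + g_p(u, Dv_p(w)), satisfies ℒ_v g = -2c₁ g - 2(c₂ + c₃) g̃ + 2(c₁ + c₂ + c₃) η⊗η, where g̃_p(u, w) = g_p(u, φ_p w) + η(u)η(w) and η(u) = u³. -/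
import Mathlib


noncomputable section

open Real

/-- The point-dependent B-metric on `ℝ³`:
`g(∂₁,∂₁) = -g(∂₂,∂₂) = cos 2x³`, `g(∂₁,∂₂) = sin 2x³`,
`g(∂₁,∂₃) = g(∂₂,∂₃) = 0`, `g(∂₃,∂₃) = 1`. -/
def gP (p : Fin 3 → ℝ) (u w : Fin 3 → ℝ) : ℝ :=
  Real.cos (2 * p 2) * (u 0 * w 0 - u 1 * w 1)
    + Real.sin (2 * p 2) * (u 0 * w 1 + u 1 * w 0) + u 2 * w 2

/-- The frame vector field `e₁(p) = (cos x³, sin x³, 0)`. -/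
def E1 (p : Fin 3 → ℝ) : Fin 3 → ℝ := ![Real.cos (p 2), Real.sin (p 2), 0]

/-- The frame vector field `e₂(p) = (-sin x³, cos x³, 0)`. -/
def E2 (p : Fin 3 → ℝ) : Fin 3 → ℝ := ![-Real.sin (p 2), Real.cos (p 2), 0]

/-- The frame vector field `e₃(p) = (0, 0, 1)`. -/
def E3 (p : Fin 3 → ℝ) : Fin 3 → ℝ := ![0, 0, 1]

/-- The contact form `η(u) = u³`. -/
def etaR3 (u : Fin 3 → ℝ) : ℝ := u 2

/-- The potential vector field `v = v¹e₁ + v²e₂ + v³e₃` with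
`v¹ = -(c₁ cos x³ + c₂ sin x³)x¹ + (c₂ cos x³ - c₁ sin x³)x² + sin x³`,
`v² = -(c₂ cos x³ - c₁ sin x³)x¹ - (c₁ cos x³ + c₂ sin x³)x² + cos x³`,
`v³ = c₃`. -/
def vPot (c₁ c₂ c₃ : ℝ) (p : Fin 3 → ℝ) : Fin 3 → ℝ :=
  (-(c₁ * Real.cos (p 2) + c₂ * Real.sin (p 2)) * p 0
      + (c₂ * Real.cos (p 2) - c₁ * Real.sin (p 2)) * p 1 + Real.sin (p 2)) • E1 p
  + (-(c₂ * Real.cos (p 2) - c₁ * Real.sin (p 2)) * p 0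
      - (c₁ * Real.cos (p 2) + c₂ * Real.sin (p 2)) * p 1 + Real.cos (p 2)) • E2 p
  + c₃ • E3 p

/-- The Lie derivative of `g` along a vector field `v`, evaluated pointwise on
constant vectors `u, w`:
`(𝓛_v g)_p(u, w) = D_p[q ↦ g_q(u,w)](v(p)) + g_p(Dv_p u, w) + g_p(u, Dv_p w)`. -/
def lieDerG (v : (Fin 3 → ℝ) → (Fin 3 → ℝ)) (p u w : Fin 3 → ℝ) : ℝ :=
  fderiv ℝ (fun q => gP q u w) p (v p)
    + gP p (fderiv ℝ v p u) w + gP p u (fderiv ℝ v p w)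

-- the linear part of vPot
def Lmap (c₁ c₂ : ℝ) : (Fin 3 → ℝ) →L[ℝ] (Fin 3 → ℝ) :=
  LinearMap.toContinuousLinearMap
    (Matrix.mulVecLin (Matrix.of ![![-c₁, c₂, 0], ![-c₂, -c₁, 0], ![0, 0, 0]]))

lemma Lmap_apply (c₁ c₂ : ℝ) (u : Fin 3 → ℝ) :
    Lmap c₁ c₂ u = ![-c₁ * u 0 + c₂ * u 1, -c₂ * u 0 - c₁ * u 1, 0] := by
  funext i
  fin_cases i <;>
    simp [Lmap, Matrix.mulVecLin, Matrix.mulVec, dotProduct, Fin.sum_univ_three] <;> ring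

lemma vPot_eq (c₁ c₂ c₃ : ℝ) : vPot c₁ c₂ c₃ = fun p => Lmap c₁ c₂ p + ![0, 1, c₃] := by
  funext p i
  have h := sin_sq_add_cos_sq (p 2)
  fin_cases i
  · simp [vPot, E1, E2, E3, Lmap_apply]
    linear_combination (-(c₁ * p 0) + c₂ * p 1) * h
  · simp [vPot, E1, E2, E3, Lmap_apply]
    linear_combination (-(c₂ * p 0) - c₁ * p 1 + 1) * h
  · simp [vPot, E1, E2, E3, Lmap_apply]

lemma fderiv_vPot (c₁ c₂ c₃ : ℝ) (p : Fin 3 → ℝ) :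
    fderiv ℝ (vPot c₁ c₂ c₃) p = Lmap c₁ c₂ := by
  rw [vPot_eq]
  exact (((Lmap c₁ c₂).hasFDerivAt (x := p)).add_const _).fderiv

lemma phi_eq (φ : (Fin 3 → ℝ) → (Fin 3 → ℝ) →ₗ[ℝ] (Fin 3 → ℝ))
    (hφ1 : ∀ p : Fin 3 → ℝ, φ p (E1 p) = E2 p)
    (hφ2 : ∀ p : Fin 3 → ℝ, φ p (E2 p) = -(E1 p))
    (hφ3 : ∀ p : Fin 3 → ℝ, φ p (E3 p) = 0) (p w : Fin 3 → ℝ) :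
    φ p w = ![-w 1, w 0, 0] := by
  have h := sin_sq_add_cos_sq (p 2)
  have hw : w = (w 0 * Real.cos (p 2) + w 1 * Real.sin (p 2)) • E1 p
      + (-(w 0) * Real.sin (p 2) + w 1 * Real.cos (p 2)) • E2 p + w 2 • E3 p := by
    funext i
    fin_cases i <;> simp [E1, E2, E3] <;>
      first
      | ring1
      | linear_combination (w 1) * h
      | linear_combination (-(w 1)) * h
      | linear_combination (w 0) * h
      | linear_combination (-(w 0)) * h
  rw [hw]
  simp only [map_add, map_smul, hφ1, hφ2, hφ3]
  funext i
  fin_cases i <;> simp [E1, E2, E3] <;>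
    first
    | ring1
    | linear_combination (w 1) * h
    | linear_combination (-(w 1)) * h
    | linear_combination (w 0) * h
    | linear_combination (-(w 0)) * h
    | linear_combination (2*w 1) * h
    | linear_combination (-(2*w 1)) * h
    | linear_combination (2*w 0) * h
    | linear_combination (-(2*w 0)) * h

/-- For the potential `v` above,
`𝓛_v g = -2c₁ g - 2(c₂+c₃) g̃ + 2(c₁+c₂+c₃) η⊗η`,
where `g̃_p(u,w) = g_p(u, φ_p w) + η(u)η(w)` and `φ_p` is the pointwise linear map
determined by `φ_p e₁(p) = e₂(p)`, `φ_p e₂(p) = -e₁(p)`, `φ_p e₃(p) = 0`. -/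
theorem lie_derivative_of_potential (c₁ c₂ c₃ : ℝ)
    (φ : (Fin 3 → ℝ) → (Fin 3 → ℝ) →ₗ[ℝ] (Fin 3 → ℝ))
    (hφ1 : ∀ p : Fin 3 → ℝ, φ p (E1 p) = E2 p)
    (hφ2 : ∀ p : Fin 3 → ℝ, φ p (E2 p) = -(E1 p))
    (hφ3 : ∀ p : Fin 3 → ℝ, φ p (E3 p) = 0) :
    ∀ (p u w : Fin 3 → ℝ),
      lieDerG (vPot c₁ c₂ c₃) p u w
        = -2 * c₁ * gP p u w
          - 2 * (c₂ + c₃) * (gP p u (φ p w) + etaR3 u * etaR3 w)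
          + 2 * (c₁ + c₂ + c₃) * (etaR3 u * etaR3 w) := by
  intro p u w
  -- the metric derivative term
  have hF : HasFDerivAt (fun q : Fin 3 → ℝ => gP q u w)
      ((-Real.sin (2 * p 2) * 2 * (u 0 * w 0 - u 1 * w 1)
        + Real.cos (2 * p 2) * 2 * (u 0 * w 1 + u 1 * w 0)) •
        (ContinuousLinearMap.proj (R := ℝ) (φ := fun _ : Fin 3 => ℝ) 2)) p := by
    have h2t : HasDerivAt (fun t : ℝ => 2 * t) 2 (p 2) := by
      simpa using (hasDerivAt_id (p 2)).const_mul 2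
    have hc : HasDerivAt (fun t : ℝ => Real.cos (2 * t)) (-Real.sin (2 * p 2) * 2) (p 2) :=
      (Real.hasDerivAt_cos (2 * p 2)).comp _ h2t
    have hs : HasDerivAt (fun t : ℝ => Real.sin (2 * t)) (Real.cos (2 * p 2) * 2) (p 2) :=
      (Real.hasDerivAt_sin (2 * p 2)).comp _ h2t
    have hf : HasDerivAt (fun t : ℝ => Real.cos (2 * t) * (u 0 * w 0 - u 1 * w 1)
        + Real.sin (2 * t) * (u 0 * w 1 + u 1 * w 0) + u 2 * w 2)
        (-Real.sin (2 * p 2) * 2 * (u 0 * w 0 - u 1 * w 1)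
          + Real.cos (2 * p 2) * 2 * (u 0 * w 1 + u 1 * w 0)) (p 2) := by
      exact ((hc.mul_const _).add (hs.mul_const _)).add_const _
    exact hf.comp_hasFDerivAt p
      (ContinuousLinearMap.proj (R := ℝ) (φ := fun _ : Fin 3 => ℝ) 2).hasFDerivAt
  have hv2 : vPot c₁ c₂ c₃ p 2 = c₃ := by
    rw [vPot_eq]; simp [Lmap_apply]
  have hφw := phi_eq φ hφ1 hφ2 hφ3 p w
  rw [lieDerG, hF.fderiv, fderiv_vPot, hφw]
  simp only [ContinuousLinearMap.smul_apply, ContinuousLinearMap.proj_apply, smul_eq_mul, hv2,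
    Lmap_apply, gP, etaR3]
  simp only [Matrix.cons_val_zero, Matrix.cons_val_one, Matrix.head_cons,
    Matrix.cons_val_two, Matrix.tail_cons]
  ring
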